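/- Orthogonal decomposition into minimal domain and boundary data space (Lemma 5.1): For φ ∈ D(G) the following are equivalent: (i) ⟨ψ | φ⟩_{H₀} + ⟨G̊ψ | Gφ⟩_{H₁} = 0 for all ψ ∈ D(G̊); (ii) Gφ ∈ D(D) and DGφ = φ. Consequently, in the Hilbert space D(G) endowed with the graph inner product one has the orthogonal decomposition D(G) = D(G̊) ⊕ BD(G), and analogously D(D) = D(D̊) ⊕ BD(D) with respect to the graph inner product of D(D). -/

import Mathlib

open scoped ComplexInnerProductSpace LinearPMap

/-- `φ` belongs to the boundary data space `BD(G) = N(1 - DG)`, i.e. `φ ∈ D(G)`,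
`Gφ ∈ D(D)` and `DGφ = φ`. -/
def MemBD {H0 H1 : Type*} [AddCommGroup H0] [Module ℂ H0] [AddCommGroup H1] [Module ℂ H1]
    (G : H0 →ₗ.[ℂ] H1) (D : H1 →ₗ.[ℂ] H0) (φ : H0) : Prop :=
  ∃ (h : φ ∈ G.domain) (h' : G ⟨φ, h⟩ ∈ D.domain), D ⟨G ⟨φ, h⟩, h'⟩ = φ

section Aux

variable {E F : Type*}
  [NormedAddCommGroup E] [InnerProductSpace ℂ E] [CompleteSpace E]
  [NormedAddCommGroup F] [InnerProductSpace ℂ F] [CompleteSpace F]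

lemma pairing_iff_adjoint (A0 : E →ₗ.[ℂ] F) (hA0 : Dense (A0.domain : Set E))
    (φ : E) (y : F) :
    (∀ ψ : A0.domain, ⟪(ψ : E), φ⟫ + ⟪A0 ψ, y⟫ = 0) ↔
      ∃ h : y ∈ (A0†).domain, A0† ⟨y, h⟩ = -φ := by
  constructor
  · intro hp
    have key : ∀ ψ : A0.domain, ⟪-φ, (ψ : E)⟫ = ⟪y, A0 ψ⟫ := by
      intro ψ
      have h1 : ⟪A0 ψ, y⟫ = -⟪(ψ : E), φ⟫ := eq_neg_of_add_eq_zero_right (hp ψ)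
      calc ⟪-φ, (ψ : E)⟫ = -⟪φ, (ψ : E)⟫ := inner_neg_left _ _
        _ = -(starRingEnd ℂ) ⟪(ψ : E), φ⟫ := by rw [inner_conj_symm]
        _ = (starRingEnd ℂ) (-⟪(ψ : E), φ⟫) := by rw [map_neg]
        _ = (starRingEnd ℂ) ⟪A0 ψ, y⟫ := by rw [h1]
        _ = ⟪y, A0 ψ⟫ := inner_conj_symm _ _
    have hmem : y ∈ (A0†).domain :=
      LinearPMap.mem_adjoint_domain_of_exists y ⟨-φ, key⟩
    exact ⟨hmem, LinearPMap.adjoint_apply_eq hA0 ⟨y, hmem⟩ key⟩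
  · rintro ⟨h, heq⟩ ψ
    have h2 := LinearPMap.adjoint_isFormalAdjoint hA0 (⟨y, h⟩ : (A0†).domain) ψ
    rw [heq] at h2
    have h3 : ⟪A0 ψ, y⟫ = -⟪(ψ : E), φ⟫ := by
      rw [← inner_conj_symm (A0 ψ) y, ← h2, inner_neg_left, map_neg, inner_conj_symm]
    rw [h3]; ring

lemma master (A0 : E →ₗ.[ℂ] F) (hA0dense : Dense (A0.domain : Set E))
    (hA0closed : A0.IsClosed)
    (B : F →ₗ.[ℂ] E) (A : E →ₗ.[ℂ] F) (hB : B = -(A0†)) (hA0A : A0 ≤ A) :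
    (∀ (φ : E) (hφ : φ ∈ A.domain),
      ((∀ ψ : A0.domain, ⟪(ψ : E), φ⟫ + ⟪A0 ψ, A ⟨φ, hφ⟩⟫ = 0) ↔ MemBD A B φ)) ∧
    (∀ (ψ : A0.domain) (φ : E) (hφ : φ ∈ A.domain), MemBD A B φ →
      ⟪(ψ : E), φ⟫ + ⟪A0 ψ, A ⟨φ, hφ⟩⟫ = 0) ∧
    (∀ φ : E, φ ∈ A.domain →
      ∃ φ₀ φ₁ : E, φ₀ ∈ A0.domain ∧ MemBD A B φ₁ ∧ φ = φ₀ + φ₁) := by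
  subst hB
  have hiff : ∀ (φ : E) (hφ : φ ∈ A.domain),
      ((∀ ψ : A0.domain, ⟪(ψ : E), φ⟫ + ⟪A0 ψ, A ⟨φ, hφ⟩⟫ = 0) ↔ MemBD A (-(A0†)) φ) := by
    intro φ hφ
    rw [pairing_iff_adjoint A0 hA0dense φ (A ⟨φ, hφ⟩)]
    constructor
    · rintro ⟨h, heq⟩
      refine ⟨hφ, h, ?_⟩
      show (-(A0†)) ⟨A ⟨φ, hφ⟩, h⟩ = φ
      rw [LinearPMap.neg_apply, heq, neg_neg]
    · rintro ⟨h, h', heq⟩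
      refine ⟨h', ?_⟩
      have h2 : -(A0† ⟨A ⟨φ, h⟩, h'⟩) = φ := by
        rw [← LinearPMap.neg_apply, heq]
      exact neg_eq_iff_eq_neg.mp h2
  refine ⟨hiff, fun ψ φ hφ hm => (hiff φ hφ).mpr hm ψ, ?_⟩
  intro φ hφ
  set e : WithLp 2 (E × F) ≃L[ℂ] E × F := WithLp.prodContinuousLinearEquiv 2 ℂ E F with he
  set K : Submodule ℂ (WithLp 2 (E × F)) :=
    A0.graph.comap (e : WithLp 2 (E × F) →ₗ[ℂ] E × F) with hK
  have hKclosed : IsClosed (K : Set (WithLp 2 (E × F))) :=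
    hA0closed.preimage e.continuous
  haveI : CompleteSpace K := hKclosed.completeSpace_coe
  set x : WithLp 2 (E × F) := e.symm (φ, A ⟨φ, hφ⟩) with hx
  set p : WithLp 2 (E × F) := (K.orthogonalProjectionOnto x : WithLp 2 (E × F)) with hp
  have hpK : p ∈ K := SetLike.coe_mem _
  have hoq : x - p ∈ Kᗮ := K.sub_starProjection_mem_orthogonal x
  have hpg : e p ∈ A0.graph := hpK
  obtain ⟨z, hz1, hz2⟩ := A0.mem_graph_iff.mp hpg
  have hxg : e x ∈ A.graph := by
    rw [hx, e.apply_symm_apply]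
    exact A.mem_graph ⟨φ, hφ⟩
  have hpgA : e p ∈ A.graph := LinearPMap.le_graph_of_le hA0A hpg
  have hsub : e (x - p) ∈ A.graph := by
    rw [map_sub]; exact A.graph.sub_mem hxg hpgA
  obtain ⟨w, hw1, hw2⟩ := A.mem_graph_iff.mp hsub
  have hS : e (x - p) = (φ, A ⟨φ, hφ⟩) - e p := by
    rw [map_sub, hx, e.apply_symm_apply]
  refine ⟨(z : E), (w : E), z.2, ?_, ?_⟩
  · refine (hiff (w : E) w.2).mp ?_
    intro ψ
    have hmemK : e.symm ((ψ : E), A0 ψ) ∈ K := by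
      show e (e.symm ((ψ : E), A0 ψ)) ∈ A0.graph
      rw [e.apply_symm_apply]
      exact A0.mem_graph ψ
    have h0 := (Submodule.mem_orthogonal _ _).mp hoq _ hmemK
    rw [WithLp.prod_inner_apply] at h0
    have e1 : (w : E) = (x - p).fst := hw1
    have e2 : A ⟨(w : E), w.2⟩ = (x - p).snd := hw2
    rw [e2, e1]
    exact h0
  · have hw1' : (w : E) = φ - (z : E) := by
      rw [hw1, hS, hz1, Prod.fst_sub]
    rw [hw1']; abel

end Aux

theorem stmt5
    {H0 H1 : Type*}
    [NormedAddCommGroup H0] [InnerProductSpace ℂ H0] [CompleteSpace H0]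
    [NormedAddCommGroup H1] [InnerProductSpace ℂ H1] [CompleteSpace H1]
    (G0 : H0 →ₗ.[ℂ] H1) (D0 : H1 →ₗ.[ℂ] H0)
    (hG0dense : Dense (G0.domain : Set H0)) (hD0dense : Dense (D0.domain : Set H1))
    (hG0closed : G0.IsClosed) (hD0closed : D0.IsClosed)
    (D : H1 →ₗ.[ℂ] H0) (G : H0 →ₗ.[ℂ] H1)
    (hD : D = -(G0†)) (hG : G = -(D0†))
    (hD0D : D0 ≤ D) (hG0G : G0 ≤ G) :
    -- equivalence of (i) and (ii)
    (∀ (φ : H0) (hφ : φ ∈ G.domain),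
      ((∀ ψ : G0.domain, ⟪(ψ : H0), φ⟫ + ⟪G0 ψ, G ⟨φ, hφ⟩⟫ = 0) ↔ MemBD G D φ)) ∧
    -- graph-orthogonality of `D(G̊)` and `BD(G)` in `D(G)`
    (∀ (ψ : G0.domain) (φ : H0) (hφ : φ ∈ G.domain), MemBD G D φ →
      ⟪(ψ : H0), φ⟫ + ⟪G0 ψ, G ⟨φ, hφ⟩⟫ = 0) ∧
    -- decomposition `D(G) = D(G̊) + BD(G)`
    (∀ φ : H0, φ ∈ G.domain →
      ∃ φ₀ φ₁ : H0, φ₀ ∈ G0.domain ∧ MemBD G D φ₁ ∧ φ = φ₀ + φ₁) ∧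
    -- graph-orthogonality of `D(D̊)` and `BD(D)` in `D(D)`
    (∀ (χ : D0.domain) (ψ : H1) (hψ : ψ ∈ D.domain), MemBD D G ψ →
      ⟪(χ : H1), ψ⟫ + ⟪D0 χ, D ⟨ψ, hψ⟩⟫ = 0) ∧
    -- decomposition `D(D) = D(D̊) + BD(D)`
    (∀ ψ : H1, ψ ∈ D.domain →
      ∃ ψ₀ ψ₁ : H1, ψ₀ ∈ D0.domain ∧ MemBD D G ψ₁ ∧ ψ = ψ₀ + ψ₁) := by
  obtain ⟨h1, h2, h3⟩ := master G0 hG0dense hG0closed D G hD hG0G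
  obtain ⟨_, h5, h6⟩ := master D0 hD0dense hD0closed G D hG hD0D
  exact ⟨h1, h2, h3, h5, h6⟩
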